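/- Let M ∈ [0, 2] and let β₀, β₁, β₂ ∈ ℝ. Then the uniform energy E_U attains its infimum over S_C(M) at a real vector: there exists ζ_g ∈ S_R(M) such that E_U(ζ_g) ≤ E_U(ξ) for all ξ ∈ S_C(M). -/

import Mathlib

noncomputable section

/-- τ for complex 5-vectors (ξ₂, ξ₁, ξ₀, ξ₋₁, ξ₋₂). -/
def tauC (z2 z1 z0 zm1 zm2 : ℂ) : ℂ :=
  2 * ((starRingEnd ℂ) z2 * z1 + (starRingEnd ℂ) zm1 * zm2)
    + (Real.sqrt 6 : ℂ) * ((starRingEnd ℂ) z1 * z0 + (starRingEnd ℂ) z0 * zm1)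

/-- δ for complex 5-vectors. -/
def deltaC (z2 z1 z0 zm1 zm2 : ℂ) : ℂ :=
  2 * z2 * zm2 - 2 * z1 * zm1 + z0 ^ 2

/-- F_z for complex 5-vectors. -/
def FzC (z2 z1 z0 zm1 zm2 : ℂ) : ℝ :=
  2 * (‖z2‖ ^ 2 - ‖zm2‖ ^ 2)
    + ‖z1‖ ^ 2 - ‖zm1‖ ^ 2

/-- Membership in S_C(M): mass and magnetization constraints. -/
def memSC (M : ℝ) (z2 z1 z0 zm1 zm2 : ℂ) : Prop :=
  ‖z2‖ ^ 2 + ‖z1‖ ^ 2 + ‖z0‖ ^ 2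
      + ‖zm1‖ ^ 2 + ‖zm2‖ ^ 2 = 1 ∧
  2 * ‖z2‖ ^ 2 + ‖z1‖ ^ 2
      - ‖zm1‖ ^ 2 - 2 * ‖zm2‖ ^ 2 = M

/-- The uniform energy E_U. -/
def EU (b0 b1 b2 M : ℝ) (z2 z1 z0 zm1 zm2 : ℂ) : ℝ :=
  (1 / 2) * (b1 * ‖tauC z2 z1 z0 zm1 zm2‖ ^ 2
    + (b2 / 5) * ‖deltaC z2 z1 z0 zm1 zm2‖ ^ 2
    + b0 + b1 * M ^ 2)

lemma rotN (c s r A2 A1 A0 Am1 Am2 B2 B1 B0 Bm1 Bm2 : ℂ) (h1 : c^2 + s^2 = 1) (h2 : r^2 = 6) :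
    (s^4*Am2 - 2*c*s^3*Am1 + c^2*s^2*r*A0 - 2*c^3*s*A1 + c^4*A2) * (s^4*Bm2 - 2*c*s^3*Bm1 + c^2*s^2*r*B0 - 2*c^3*s*B1 + c^4*B2) + (-s^4*Am1 - 2*c*s^3*Am2 + c*s^3*r*A0 + 3*c^2*s^2*Am1 - 3*c^2*s^2*A1 + 2*c^3*s*A2 - c^3*s*r*A0 + c^4*A1) * (-s^4*Bm1 - 2*c*s^3*Bm2 + c*s^3*r*B0 + 3*c^2*s^2*Bm1 - 3*c^2*s^2*B1 + 2*c^3*s*B2 - c^3*s*r*B0 + c^4*B1) + (A0 + c*s^3*r*Am1 - c*s^3*r*A1 - 6*c^2*s^2*A0 + c^2*s^2*r*Am2 + c^2*s^2*r*A2 - c^3*s*r*Am1 + c^3*s*r*A1) * (B0 + c*s^3*r*Bm1 - c*s^3*r*B1 - 6*c^2*s^2*B0 + c^2*s^2*r*Bm2 + c^2*s^2*r*B2 - c^3*s*r*Bm1 + c^3*s*r*B1)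
      + (-s^4*A1 + 2*c*s^3*A2 - c*s^3*r*A0 - 3*c^2*s^2*Am1 + 3*c^2*s^2*A1 - 2*c^3*s*Am2 + c^3*s*r*A0 + c^4*Am1) * (-s^4*B1 + 2*c*s^3*B2 - c*s^3*r*B0 - 3*c^2*s^2*Bm1 + 3*c^2*s^2*B1 - 2*c^3*s*Bm2 + c^3*s*r*B0 + c^4*Bm1) + (s^4*A2 + 2*c*s^3*A1 + c^2*s^2*r*A0 + 2*c^3*s*Am1 + c^4*Am2) * (s^4*B2 + 2*c*s^3*B1 + c^2*s^2*r*B0 + 2*c^3*s*Bm1 + c^4*Bm2)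
    = A2*B2 + A1*B1 + A0*B0 + Am1*Bm1 + Am2*Bm2 := by
  linear_combination (Am2*Bm2 + Am1*Bm1 + A1*B1 + A2*B2 + s^2*Am2*Bm2 + s^2*Am1*Bm1 + s^2*A1*B1 + s^2*A2*B2 + s^4*Am2*Bm2 + s^4*Am1*Bm1 + s^4*A1*B1 + s^4*A2*B2 + s^6*Am2*Bm2 + s^6*Am1*Bm1 + s^6*A1*B1 + s^6*A2*B2 - c*s^3*r*Am1*B0 - c*s^3*r*A0*Bm1 + c*s^3*r*A0*B1 + c*s^3*r*A1*B0 - c*s^5*r*Am1*B0 - c*s^5*r*A0*Bm1 + c*s^5*r*A0*B1 + c*s^5*r*A1*B0 + c^2*Am2*Bm2 + c^2*Am1*Bm1 + c^2*A1*B1 + c^2*A2*B2 + 2*c^2*s^2*Am2*Bm2 + 2*c^2*s^2*Am1*Bm1 + 12*c^2*s^2*A0*B0 + 2*c^2*s^2*A1*B1 + 2*c^2*s^2*A2*B2 - c^2*s^2*r*Am2*B0 - c^2*s^2*r*A0*Bm2 - c^2*s^2*r*A0*B2 - c^2*s^2*r*A2*B0 + 3*c^2*s^4*Am2*Bm2 +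 3*c^2*s^4*Am1*Bm1 + 12*c^2*s^4*A0*B0 + 3*c^2*s^4*A1*B1 + 3*c^2*s^4*A2*B2 - c^2*s^4*r*Am2*B0 - c^2*s^4*r*A0*Bm2 - c^2*s^4*r*A0*B2 - c^2*s^4*r*A2*B0 + c^3*s*r*Am1*B0 + c^3*s*r*A0*Bm1 - c^3*s*r*A0*B1 - c^3*s*r*A1*B0 + c^4*Am2*Bm2 + c^4*Am1*Bm1 + c^4*A1*B1 + c^4*A2*B2 + 3*c^4*s^2*Am2*Bm2 + 3*c^4*s^2*Am1*Bm1 + 12*c^4*s^2*A0*B0 + 3*c^4*s^2*A1*B1 + 3*c^4*s^2*A2*B2 - c^4*s^2*r*Am2*B0 - c^4*s^2*r*A0*Bm2 - c^4*s^2*r*A0*B2 - c^4*s^2*r*A2*B0 + c^5*s*r*Am1*B0 + c^5*s*r*A0*Bm1 - c^5*s*r*A0*B1 - c^5*s*r*A1*B0 + c^6*Am2*Bm2 + c^6*Am1*Bm1 + c^6*A1*B1 + c^6*A2*B2) * h1 + (c^2*s^6*Am1*Bm1 - c^2*s^6*Am1*B1 + 2*c^2*s^6*A0*B0 - c^2*s^6*A1*Bm1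 + c^2*s^6*A1*B1 + c^3*s^5*Am2*Bm1 - c^3*s^5*Am2*B1 + c^3*s^5*Am1*Bm2 + c^3*s^5*Am1*B2 - c^3*s^5*A1*Bm2 - c^3*s^5*A1*B2 + c^3*s^5*A2*Bm1 - c^3*s^5*A2*B1 + c^4*s^4*Am2*Bm2 + c^4*s^4*Am2*B2 - 2*c^4*s^4*Am1*Bm1 + 2*c^4*s^4*Am1*B1 - 2*c^4*s^4*A0*B0 + 2*c^4*s^4*A1*Bm1 - 2*c^4*s^4*A1*B1 + c^4*s^4*A2*Bm2 + c^4*s^4*A2*B2 - c^5*s^3*Am2*Bm1 + c^5*s^3*Am2*B1 - c^5*s^3*Am1*Bm2 - c^5*s^3*Am1*B2 + c^5*s^3*A1*Bm2 + c^5*s^3*A1*B2 - c^5*s^3*A2*Bm1 + c^5*s^3*A2*B1 + c^6*s^2*Am1*Bm1 - c^6*s^2*Am1*B1 + 2*c^6*s^2*A0*B0 - c^6*s^2*A1*Bm1 + c^6*s^2*A1*B1) * h2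

lemma rotD (c s r A2 A1 A0 Am1 Am2 : ℂ) (h1 : c^2 + s^2 = 1) (h2 : r^2 = 6) :
    2 * ((s^4*Am2 - 2*c*s^3*Am1 + c^2*s^2*r*A0 - 2*c^3*s*A1 + c^4*A2) * (s^4*A2 + 2*c*s^3*A1 + c^2*s^2*r*A0 + 2*c^3*s*Am1 + c^4*Am2)) - 2 * ((-s^4*Am1 - 2*c*s^3*Am2 + c*s^3*r*A0 + 3*c^2*s^2*Am1 - 3*c^2*s^2*A1 + 2*c^3*s*A2 - c^3*s*r*A0 + c^4*A1) * (-s^4*A1 + 2*c*s^3*A2 - c*s^3*r*A0 - 3*c^2*s^2*Am1 + 3*c^2*s^2*A1 - 2*c^3*s*Am2 + c^3*s*r*A0 + c^4*Am1)) + (A0 + c*s^3*r*Am1 - c*s^3*r*A1 - 6*c^2*s^2*A0 + c^2*s^2*r*Am2 + c^2*s^2*r*A2 - c^3*s*r*Am1 + c^3*s*r*A1)^2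
    = 2*A2*Am2 - 2*A1*Am1 + A0^2 := by
  linear_combination (-2*A1*Am1 + 2*A2*Am2 - 2*s^2*A1*Am1 + 2*s^2*A2*Am2 - 2*s^4*A1*Am1 + 2*s^4*A2*Am2 - 2*s^6*A1*Am1 + 2*s^6*A2*Am2 - 2*c*s^3*r*A0*Am1 + 2*c*s^3*r*A1*A0 - 2*c*s^5*r*A0*Am1 + 2*c*s^5*r*A1*A0 - 2*c^2*A1*Am1 + 2*c^2*A2*Am2 + 12*c^2*s^2*A0^2 - 4*c^2*s^2*A1*Am1 + 4*c^2*s^2*A2*Am2 - 2*c^2*s^2*r*A0*Am2 - 2*c^2*s^2*r*A2*A0 + 12*c^2*s^4*A0^2 - 6*c^2*s^4*A1*Am1 + 6*c^2*s^4*A2*Am2 - 2*c^2*s^4*r*A0*Am2 - 2*c^2*s^4*r*A2*A0 + 2*c^3*s*r*A0*Am1 - 2*c^3*s*r*A1*A0 - 2*c^4*A1*Am1 + 2*c^4*A2*Am2 + 12*c^4*s^2*A0^2 - 6*c^4*s^2*A1*Am1 + 6*c^4*s^2*A2*Am2 - 2*c^4*s^2*r*A0*Am2 - 2*c^4*s^2*r*A2*A0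 + 2*c^5*s*r*A0*Am1 - 2*c^5*s*r*A1*A0 - 2*c^6*A1*Am1 + 2*c^6*A2*Am2) * h1 + (c^2*s^6*Am1^2 + 2*c^2*s^6*A0^2 - 2*c^2*s^6*A1*Am1 + c^2*s^6*A1^2 + 2*c^3*s^5*Am1*Am2 - 2*c^3*s^5*A1*Am2 + 2*c^3*s^5*A2*Am1 - 2*c^3*s^5*A2*A1 + c^4*s^4*Am2^2 - 2*c^4*s^4*Am1^2 - 2*c^4*s^4*A0^2 + 4*c^4*s^4*A1*Am1 - 2*c^4*s^4*A1^2 + 2*c^4*s^4*A2*Am2 + c^4*s^4*A2^2 - 2*c^5*s^3*Am1*Am2 + 2*c^5*s^3*A1*Am2 - 2*c^5*s^3*A2*Am1 + 2*c^5*s^3*A2*A1 + c^6*s^2*Am1^2 + 2*c^6*s^2*A0^2 - 2*c^6*s^2*A1*Am1 + c^6*s^2*A1^2) * h2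

lemma rotF (c s r A2 A1 A0 Am1 Am2 B2 B1 B0 Bm1 Bm2 : ℂ) (h1 : c^2 + s^2 = 1) (h2 : r^2 = 6) :
    2 * ((s^4*Am2 - 2*c*s^3*Am1 + c^2*s^2*r*A0 - 2*c^3*s*A1 + c^4*A2) * (s^4*Bm2 - 2*c*s^3*Bm1 + c^2*s^2*r*B0 - 2*c^3*s*B1 + c^4*B2)) + (-s^4*Am1 - 2*c*s^3*Am2 + c*s^3*r*A0 + 3*c^2*s^2*Am1 - 3*c^2*s^2*A1 + 2*c^3*s*A2 - c^3*s*r*A0 + c^4*A1) * (-s^4*Bm1 - 2*c*s^3*Bm2 + c*s^3*r*B0 + 3*c^2*s^2*Bm1 - 3*c^2*s^2*B1 + 2*c^3*s*B2 - c^3*s*r*B0 + c^4*B1) - (-s^4*A1 + 2*c*s^3*A2 - c*s^3*r*A0 - 3*c^2*s^2*Am1 + 3*c^2*s^2*A1 - 2*c^3*s*Am2 + c^3*s*r*A0 + c^4*Am1) * (-s^4*B1 + 2*c*s^3*B2 - c*s^3*r*B0 - 3*c^2*s^2*Bm1 + 3*c^2*s^2*B1 - 2*c^3*s*Bm2 +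 c^3*s*r*B0 + c^4*Bm1) - 2 * ((s^4*A2 + 2*c*s^3*A1 + c^2*s^2*r*A0 + 2*c^3*s*Am1 + c^4*Am2) * (s^4*B2 + 2*c*s^3*B1 + c^2*s^2*r*B0 + 2*c^3*s*Bm1 + c^4*Bm2))
    = (c^2 - s^2) * (2*A2*B2 + A1*B1 - Am1*Bm1 - 2*Am2*Bm2)
      - c * s * ((2*(B2*A1 + Bm1*Am2) + r*(B1*A0 + B0*Am1)) + (2*(A2*B1 + Am1*Bm2) + r*(A1*B0 + A0*Bm1))) := by
  linear_combination (2*s^2*Am2*Bm2 + s^2*Am1*Bm1 - s^2*A1*B1 - 2*s^2*A2*B2 + 2*s^4*Am2*Bm2 + s^4*Am1*Bm1 - s^4*A1*B1 - 2*s^4*A2*B2 + 2*s^6*Am2*Bm2 + s^6*Am1*Bm1 - s^6*A1*B1 - 2*s^6*A2*B2 - 2*c*s*Am2*Bm1 - 2*c*s*Am1*Bm2 - 2*c*s*A1*B2 - 2*c*s*A2*B1 - c*s*r*Am1*B0 - c*s*r*A0*Bm1 - c*s*r*A0*B1 - c*s*r*A1*B0 - 2*c*s^3*Am2*Bm1 -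 2*c*s^3*Am1*Bm2 - 2*c*s^3*A1*B2 - 2*c*s^3*A2*B1 - c*s^3*r*Am1*B0 - c*s^3*r*A0*Bm1 - c*s^3*r*A0*B1 - c*s^3*r*A1*B0 - 2*c*s^5*Am2*Bm1 - 2*c*s^5*Am1*Bm2 - 2*c*s^5*A1*B2 - 2*c*s^5*A2*B1 - c*s^5*r*Am1*B0 - c*s^5*r*A0*Bm1 - c*s^5*r*A0*B1 - c*s^5*r*A1*B0 - 2*c^2*Am2*Bm2 - c^2*Am1*Bm1 + c^2*A1*B1 + 2*c^2*A2*B2 + 2*c^2*s^4*Am2*Bm2 + c^2*s^4*Am1*Bm1 - c^2*s^4*A1*B1 - 2*c^2*s^4*A2*B2 - 2*c^3*s*Am2*Bm1 - 2*c^3*s*Am1*Bm2 - 2*c^3*s*A1*B2 - 2*c^3*s*A2*B1 - c^3*s*r*Am1*B0 - c^3*s*r*A0*Bm1 - c^3*s*r*A0*B1 - c^3*s*r*A1*B0 - 4*c^3*s^3*Am2*Bm1 - 4*c^3*s^3*Am1*Bm2 - 4*c^3*s^3*A1*B2 - 4*c^3*s^3*A2*B1 - 2*c^3*s^3*r*Am1*B0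 - 2*c^3*s^3*r*A0*Bm1 - 2*c^3*s^3*r*A0*B1 - 2*c^3*s^3*r*A1*B0 - 2*c^4*Am2*Bm2 - c^4*Am1*Bm1 + c^4*A1*B1 + 2*c^4*A2*B2 - 2*c^4*s^2*Am2*Bm2 - c^4*s^2*Am1*Bm1 + c^4*s^2*A1*B1 + 2*c^4*s^2*A2*B2 - 2*c^5*s*Am2*Bm1 - 2*c^5*s*Am1*Bm2 - 2*c^5*s*A1*B2 - 2*c^5*s*A2*B1 - c^5*s*r*Am1*B0 - c^5*s*r*A0*Bm1 - c^5*s*r*A0*B1 - c^5*s*r*A1*B0 - 2*c^6*Am2*Bm2 - c^6*Am1*Bm1 + c^6*A1*B1 + 2*c^6*A2*B2) * h1 + (0) * h2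
lemma nematic (a b c d e : ℂ)
    (h : ‖a‖^2 + ‖b‖^2 + ‖c‖^2 + ‖d‖^2 + ‖e‖^2 = 1) :
    (2*‖a‖^2 + ‖b‖^2 - ‖d‖^2 - 2*‖e‖^2)^2
      + 4*‖deltaC a b c d e‖^2 ≤ 4 := by
  have hδ : ‖deltaC a b c d e‖
      ≤ 2*(‖a‖*‖e‖) + 2*(‖b‖*‖d‖) + ‖c‖^2 := by
    calc ‖deltaC a b c d e‖
        ≤ ‖2*a*e - 2*b*d‖ + ‖c^2‖ := norm_add_le _ _
      _ ≤ (‖2*a*e‖ + ‖2*b*d‖) + ‖c^2‖ := by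
          gcongr
          exact norm_sub_le _ _
      _ = 2*(‖a‖*‖e‖) + 2*(‖b‖*‖d‖) + ‖c‖^2 := by
          simp only [norm_mul, norm_pow, Complex.norm_two]
          ring
  have h0 : 0 ≤ ‖deltaC a b c d e‖ := norm_nonneg _
  have hY2 : ‖deltaC a b c d e‖^2
      ≤ (2*(‖a‖*‖e‖) + 2*(‖b‖*‖d‖) + ‖c‖^2)^2 := by
    apply pow_le_pow_left₀ h0 hδ
  nlinarith [hY2, sq_nonneg (‖c‖*(‖a‖ - ‖e‖)),
    sq_nonneg (‖c‖*(‖b‖ - ‖d‖)),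
    sq_nonneg (‖b‖^2 - ‖d‖^2),
    sq_nonneg (‖a‖*‖b‖ - ‖e‖*‖d‖),
    sq_nonneg (‖a‖*‖d‖ - ‖e‖*‖b‖),
    norm_nonneg a, norm_nonneg b, norm_nonneg c, norm_nonneg d, norm_nonneg e]

set_option maxHeartbeats 2000000 in
lemma rotate (M t : ℝ) (hM : 0 ≤ M) (ht0 : 0 < t) (x2 x1 x0 xm1 xm2 : ℂ)
    (hn : ‖x2‖^2 + ‖x1‖^2 + ‖x0‖^2 + ‖xm1‖^2 + ‖xm2‖^2 = 1)
    (hFz : 2*‖x2‖^2 + ‖x1‖^2 - ‖xm1‖^2 - 2*‖xm2‖^2 = M)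
    (hτ : tauC x2 x1 x0 xm1 xm2 = ((t:ℝ):ℂ)) :
    t^2 + M^2 + 4*‖deltaC x2 x1 x0 xm1 xm2‖^2 ≤ 4 := by
  set f := Real.sqrt (t^2+M^2) with hfdef
  have hf2 : f^2 = t^2+M^2 := Real.sq_sqrt (by positivity)
  have hfpos : 0 < f := Real.sqrt_pos.2 (by positivity)
  have hfM : M < f := by nlinarith
  set c₀ := Real.sqrt ((f+M)/(2*f)) with hc0def
  have hc02 : c₀^2 = (f+M)/(2*f) := Real.sq_sqrt (by positivity)
  have hc0pos : 0 < c₀ := Real.sqrt_pos.2 (by positivity)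
  set s₀ := -t/(2*c₀*f) with hs0def
  have hc02' : 2*f*c₀^2 = f + M := by
    rw [hc02]; field_simp
  have hs0' : s₀*(2*c₀*f) = -t := by
    rw [hs0def]; field_simp
  have hcs : c₀^2 + s₀^2 = 1 := by
    have hT1 : (c₀^2 + s₀^2 - 1) * (4*c₀^2*f^2) = 0 := by
      linear_combination (2*f*c₀^2 + M - f)*hc02' - hf2 + (2*c₀*f*s₀ - t)*hs0'
    have h40 : (4*c₀^2*f^2) ≠ 0 := by positivity
    have := (mul_eq_zero.mp hT1).resolve_right h40
    linarith
  have hrot : (c₀^2 - s₀^2)*M - c₀*s₀*(t+t) = f := by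
    have hT2 : ((c₀^2 - s₀^2)*M - c₀*s₀*(t+t) - f) * f = 0 := by
      linear_combination M*hc02' - hf2 - f*M*hcs - t*hs0'
    have := (mul_eq_zero.mp hT2).resolve_right hfpos.ne'
    linarith
  have hCS : ((c₀:ℂ))^2 + ((s₀:ℂ))^2 = 1 := by exact_mod_cast hcs
  have hR6 : ((Real.sqrt 6:ℝ):ℂ)^2 = 6 := by
    have : (Real.sqrt 6)^2 = 6 := Real.sq_sqrt (by norm_num)
    exact_mod_cast this
  have hτ' : (starRingEnd ℂ) (tauC x2 x1 x0 xm1 xm2) = ((t:ℝ):ℂ) := by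
    rw [hτ, Complex.conj_ofReal]
  have habs : ∀ z : ℂ, ((‖z‖^2 : ℝ):ℂ) = z * (starRingEnd ℂ) z := by
    intro z; rw [Complex.sq_norm, Complex.mul_conj]
  -- conjugates of rotated components
  have hco2 : (starRingEnd ℂ) ((s₀:ℂ)^4*xm2 - 2*(c₀:ℂ)*(s₀:ℂ)^3*xm1 + (c₀:ℂ)^2*(s₀:ℂ)^2*(Real.sqrt 6:ℂ)*x0 - 2*(c₀:ℂ)^3*(s₀:ℂ)*x1 + (c₀:ℂ)^4*x2) = (s₀:ℂ)^4*((starRingEnd ℂ) xm2) - 2*(c₀:ℂ)*(s₀:ℂ)^3*((starRingEnd ℂ) xm1) + (c₀:ℂ)^2*(s₀:ℂ)^2*(Real.sqrt 6:ℂ)*((starRingEnd ℂ) x0) - 2*(c₀:ℂ)^3*(s₀:ℂ)*((starRingEnd ℂ) x1) + (c₀:ℂ)^4*((starRingEnd ℂ) x2) := by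
    simp only [map_add, map_sub, map_neg, map_mul, map_pow, map_one, map_ofNat, Complex.conj_ofReal]
  have hco1 : (starRingEnd ℂ) (-(s₀:ℂ)^4*xm1 - 2*(c₀:ℂ)*(s₀:ℂ)^3*xm2 + (c₀:ℂ)*(s₀:ℂ)^3*(Real.sqrt 6:ℂ)*x0 + 3*(c₀:ℂ)^2*(s₀:ℂ)^2*xm1 - 3*(c₀:ℂ)^2*(s₀:ℂ)^2*x1 + 2*(c₀:ℂ)^3*(s₀:ℂ)*x2 - (c₀:ℂ)^3*(s₀:ℂ)*(Real.sqrt 6:ℂ)*x0 + (c₀:ℂ)^4*x1) = -(s₀:ℂ)^4*((starRingEnd ℂ) xm1) - 2*(c₀:ℂ)*(s₀:ℂ)^3*((starRingEnd ℂ) xm2) + (c₀:ℂ)*(s₀:ℂ)^3*(Real.sqrt 6:ℂ)*((starRingEnd ℂ) x0) + 3*(c₀:ℂ)^2*(s₀:ℂ)^2*((starRingEnd ℂ) xm1) - 3*(c₀:ℂ)^2*(s₀:ℂ)^2*((starRingEnd ℂ) x1) + 2*(c₀:ℂ)^3*(s₀:ℂ)*((starRingEnd ℂ) x2) - (c₀:ℂ)^3*(s₀:ℂ)*(Real.sqrt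 6:ℂ)*((starRingEnd ℂ) x0) + (c₀:ℂ)^4*((starRingEnd ℂ) x1) := by
    simp only [map_add, map_sub, map_neg, map_mul, map_pow, map_one, map_ofNat, Complex.conj_ofReal]
  have hco0 : (starRingEnd ℂ) (x0 + (c₀:ℂ)*(s₀:ℂ)^3*(Real.sqrt 6:ℂ)*xm1 - (c₀:ℂ)*(s₀:ℂ)^3*(Real.sqrt 6:ℂ)*x1 - 6*(c₀:ℂ)^2*(s₀:ℂ)^2*x0 + (c₀:ℂ)^2*(s₀:ℂ)^2*(Real.sqrt 6:ℂ)*xm2 + (c₀:ℂ)^2*(s₀:ℂ)^2*(Real.sqrt 6:ℂ)*x2 - (c₀:ℂ)^3*(s₀:ℂ)*(Real.sqrt 6:ℂ)*xm1 + (c₀:ℂ)^3*(s₀:ℂ)*(Real.sqrt 6:ℂ)*x1) = ((starRingEnd ℂ) x0) + (c₀:ℂ)*(s₀:ℂ)^3*(Real.sqrt 6:ℂ)*((starRingEnd ℂ) xm1) - (c₀:ℂ)*(s₀:ℂ)^3*(Real.sqrt 6:ℂ)*((starRingEnd ℂ) x1) - 6*(c₀:ℂ)^2*(s₀:ℂ)^2*((starRingEnd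 ℂ) x0) + (c₀:ℂ)^2*(s₀:ℂ)^2*(Real.sqrt 6:ℂ)*((starRingEnd ℂ) xm2) + (c₀:ℂ)^2*(s₀:ℂ)^2*(Real.sqrt 6:ℂ)*((starRingEnd ℂ) x2) - (c₀:ℂ)^3*(s₀:ℂ)*(Real.sqrt 6:ℂ)*((starRingEnd ℂ) xm1) + (c₀:ℂ)^3*(s₀:ℂ)*(Real.sqrt 6:ℂ)*((starRingEnd ℂ) x1) := by
    simp only [map_add, map_sub, map_neg, map_mul, map_pow, map_one, map_ofNat, Complex.conj_ofReal]
  have hcom1 : (starRingEnd ℂ) (-(s₀:ℂ)^4*x1 + 2*(c₀:ℂ)*(s₀:ℂ)^3*x2 - (c₀:ℂ)*(s₀:ℂ)^3*(Real.sqrt 6:ℂ)*x0 - 3*(c₀:ℂ)^2*(s₀:ℂ)^2*xm1 + 3*(c₀:ℂ)^2*(s₀:ℂ)^2*x1 - 2*(c₀:ℂ)^3*(s₀:ℂ)*xm2 + (c₀:ℂ)^3*(s₀:ℂ)*(Real.sqrt 6:ℂ)*x0 + (c₀:ℂ)^4*xm1) = -(s₀:ℂ)^4*((starRingEnd ℂ)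 x1) + 2*(c₀:ℂ)*(s₀:ℂ)^3*((starRingEnd ℂ) x2) - (c₀:ℂ)*(s₀:ℂ)^3*(Real.sqrt 6:ℂ)*((starRingEnd ℂ) x0) - 3*(c₀:ℂ)^2*(s₀:ℂ)^2*((starRingEnd ℂ) xm1) + 3*(c₀:ℂ)^2*(s₀:ℂ)^2*((starRingEnd ℂ) x1) - 2*(c₀:ℂ)^3*(s₀:ℂ)*((starRingEnd ℂ) xm2) + (c₀:ℂ)^3*(s₀:ℂ)*(Real.sqrt 6:ℂ)*((starRingEnd ℂ) x0) + (c₀:ℂ)^4*((starRingEnd ℂ) xm1) := by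
    simp only [map_add, map_sub, map_neg, map_mul, map_pow, map_one, map_ofNat, Complex.conj_ofReal]
  have hcom2 : (starRingEnd ℂ) ((s₀:ℂ)^4*x2 + 2*(c₀:ℂ)*(s₀:ℂ)^3*x1 + (c₀:ℂ)^2*(s₀:ℂ)^2*(Real.sqrt 6:ℂ)*x0 + 2*(c₀:ℂ)^3*(s₀:ℂ)*xm1 + (c₀:ℂ)^4*xm2) = (s₀:ℂ)^4*((starRingEnd ℂ) x2) + 2*(c₀:ℂ)*(s₀:ℂ)^3*((starRingEnd ℂ) x1) + (c₀:ℂ)^2*(s₀:ℂ)^2*(Real.sqrt 6:ℂ)*((starRingEnd ℂ) x0) + 2*(c₀:ℂ)^3*(s₀:ℂ)*((starRingEnd ℂ) xm1) + (c₀:ℂ)^4*((starRingEnd ℂ) xm2) := by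
    simp only [map_add, map_sub, map_neg, map_mul, map_pow, map_one, map_ofNat, Complex.conj_ofReal]
  have hrotN := rotN ((c₀:ℂ)) ((s₀:ℂ)) ((Real.sqrt 6:ℝ):ℂ) x2 x1 x0 xm1 xm2
    ((starRingEnd ℂ) x2) ((starRingEnd ℂ) x1) ((starRingEnd ℂ) x0) ((starRingEnd ℂ) xm1) ((starRingEnd ℂ) xm2) hCS hR6
  have hrotF := rotF ((c₀:ℂ)) ((s₀:ℂ)) ((Real.sqrt 6:ℝ):ℂ) x2 x1 x0 xm1 xm2
    ((starRingEnd ℂ) x2) ((starRingEnd ℂ) x1) ((starRingEnd ℂ) x0) ((starRingEnd ℂ) xm1) ((starRingEnd ℂ) xm2) hCS hR6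
  have hrotD := rotD ((c₀:ℂ)) ((s₀:ℂ)) ((Real.sqrt 6:ℝ):ℂ) x2 x1 x0 xm1 xm2 hCS hR6
  -- norm of rotated vector
  have keyN : ‖(s₀:ℂ)^4*xm2 - 2*(c₀:ℂ)*(s₀:ℂ)^3*xm1 + (c₀:ℂ)^2*(s₀:ℂ)^2*(Real.sqrt 6:ℂ)*x0 - 2*(c₀:ℂ)^3*(s₀:ℂ)*x1 + (c₀:ℂ)^4*x2‖^2 + ‖-(s₀:ℂ)^4*xm1 - 2*(c₀:ℂ)*(s₀:ℂ)^3*xm2 + (c₀:ℂ)*(s₀:ℂ)^3*(Real.sqrt 6:ℂ)*x0 + 3*(c₀:ℂ)^2*(s₀:ℂ)^2*xm1 - 3*(c₀:ℂ)^2*(s₀:ℂ)^2*x1 + 2*(c₀:ℂ)^3*(s₀:ℂ)*x2 - (c₀:ℂ)^3*(s₀:ℂ)*(Real.sqrt 6:ℂ)*x0 + (c₀:ℂ)^4*x1‖^2 + ‖x0 + (c₀:ℂ)*(s₀:ℂ)^3*(Real.sqrt 6:ℂ)*xm1 - (c₀:ℂ)*(s₀:ℂ)^3*(Real.sqrt 6:ℂ)*x1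 - 6*(c₀:ℂ)^2*(s₀:ℂ)^2*x0 + (c₀:ℂ)^2*(s₀:ℂ)^2*(Real.sqrt 6:ℂ)*xm2 + (c₀:ℂ)^2*(s₀:ℂ)^2*(Real.sqrt 6:ℂ)*x2 - (c₀:ℂ)^3*(s₀:ℂ)*(Real.sqrt 6:ℂ)*xm1 + (c₀:ℂ)^3*(s₀:ℂ)*(Real.sqrt 6:ℂ)*x1‖^2 + ‖-(s₀:ℂ)^4*x1 + 2*(c₀:ℂ)*(s₀:ℂ)^3*x2 - (c₀:ℂ)*(s₀:ℂ)^3*(Real.sqrt 6:ℂ)*x0 - 3*(c₀:ℂ)^2*(s₀:ℂ)^2*xm1 + 3*(c₀:ℂ)^2*(s₀:ℂ)^2*x1 - 2*(c₀:ℂ)^3*(s₀:ℂ)*xm2 + (c₀:ℂ)^3*(s₀:ℂ)*(Real.sqrt 6:ℂ)*x0 + (c₀:ℂ)^4*xm1‖^2 + ‖(s₀:ℂ)^4*x2 + 2*(c₀:ℂ)*(s₀:ℂ)^3*x1 + (c₀:ℂ)^2*(s₀:ℂ)^2*(Real.sqrt 6:ℂ)*x0 + 2*(c₀:ℂ)^3*(s₀:ℂ)*xm1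 + (c₀:ℂ)^4*xm2‖^2 = 1 := by
    have : ((‖(s₀:ℂ)^4*xm2 - 2*(c₀:ℂ)*(s₀:ℂ)^3*xm1 + (c₀:ℂ)^2*(s₀:ℂ)^2*(Real.sqrt 6:ℂ)*x0 - 2*(c₀:ℂ)^3*(s₀:ℂ)*x1 + (c₀:ℂ)^4*x2‖^2 + ‖-(s₀:ℂ)^4*xm1 - 2*(c₀:ℂ)*(s₀:ℂ)^3*xm2 + (c₀:ℂ)*(s₀:ℂ)^3*(Real.sqrt 6:ℂ)*x0 + 3*(c₀:ℂ)^2*(s₀:ℂ)^2*xm1 - 3*(c₀:ℂ)^2*(s₀:ℂ)^2*x1 + 2*(c₀:ℂ)^3*(s₀:ℂ)*x2 - (c₀:ℂ)^3*(s₀:ℂ)*(Real.sqrt 6:ℂ)*x0 + (c₀:ℂ)^4*x1‖^2 + ‖x0 + (c₀:ℂ)*(s₀:ℂ)^3*(Real.sqrt 6:ℂ)*xm1 - (c₀:ℂ)*(s₀:ℂ)^3*(Real.sqrt 6:ℂ)*x1 - 6*(c₀:ℂ)^2*(s₀:ℂ)^2*x0 + (c₀:ℂ)^2*(s₀:ℂ)^2*(Real.sqrt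 6:ℂ)*xm2 + (c₀:ℂ)^2*(s₀:ℂ)^2*(Real.sqrt 6:ℂ)*x2 - (c₀:ℂ)^3*(s₀:ℂ)*(Real.sqrt 6:ℂ)*xm1 + (c₀:ℂ)^3*(s₀:ℂ)*(Real.sqrt 6:ℂ)*x1‖^2 + ‖-(s₀:ℂ)^4*x1 + 2*(c₀:ℂ)*(s₀:ℂ)^3*x2 - (c₀:ℂ)*(s₀:ℂ)^3*(Real.sqrt 6:ℂ)*x0 - 3*(c₀:ℂ)^2*(s₀:ℂ)^2*xm1 + 3*(c₀:ℂ)^2*(s₀:ℂ)^2*x1 - 2*(c₀:ℂ)^3*(s₀:ℂ)*xm2 + (c₀:ℂ)^3*(s₀:ℂ)*(Real.sqrt 6:ℂ)*x0 + (c₀:ℂ)^4*xm1‖^2 + ‖(s₀:ℂ)^4*x2 + 2*(c₀:ℂ)*(s₀:ℂ)^3*x1 + (c₀:ℂ)^2*(s₀:ℂ)^2*(Real.sqrt 6:ℂ)*x0 + 2*(c₀:ℂ)^3*(s₀:ℂ)*xm1 + (c₀:ℂ)^4*xm2‖^2 : ℝ):ℂ) = ((1:ℝ):ℂ) := by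
      push_cast [habs]
      rw [hco2, hco1, hco0, hcom1, hcom2, hrotN]
      rw [← habs x2, ← habs x1, ← habs x0, ← habs xm1, ← habs xm2]
      push_cast
      exact_mod_cast congrArg (fun y : ℝ => ((y:ℝ):ℂ)) hn
    exact_mod_cast this
  -- Fz of rotated vector = f
  have keyF : 2*‖(s₀:ℂ)^4*xm2 - 2*(c₀:ℂ)*(s₀:ℂ)^3*xm1 + (c₀:ℂ)^2*(s₀:ℂ)^2*(Real.sqrt 6:ℂ)*x0 - 2*(c₀:ℂ)^3*(s₀:ℂ)*x1 + (c₀:ℂ)^4*x2‖^2 + ‖-(s₀:ℂ)^4*xm1 - 2*(c₀:ℂ)*(s₀:ℂ)^3*xm2 + (c₀:ℂ)*(s₀:ℂ)^3*(Real.sqrt 6:ℂ)*x0 + 3*(c₀:ℂ)^2*(s₀:ℂ)^2*xm1 - 3*(c₀:ℂ)^2*(s₀:ℂ)^2*x1 + 2*(c₀:ℂ)^3*(s₀:ℂ)*x2 - (c₀:ℂ)^3*(s₀:ℂ)*(Real.sqrt 6:ℂ)*x0 + (c₀:ℂ)^4*x1‖^2 - ‖-(s₀:ℂ)^4*x1 +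 2*(c₀:ℂ)*(s₀:ℂ)^3*x2 - (c₀:ℂ)*(s₀:ℂ)^3*(Real.sqrt 6:ℂ)*x0 - 3*(c₀:ℂ)^2*(s₀:ℂ)^2*xm1 + 3*(c₀:ℂ)^2*(s₀:ℂ)^2*x1 - 2*(c₀:ℂ)^3*(s₀:ℂ)*xm2 + (c₀:ℂ)^3*(s₀:ℂ)*(Real.sqrt 6:ℂ)*x0 + (c₀:ℂ)^4*xm1‖^2 - 2*‖(s₀:ℂ)^4*x2 + 2*(c₀:ℂ)*(s₀:ℂ)^3*x1 + (c₀:ℂ)^2*(s₀:ℂ)^2*(Real.sqrt 6:ℂ)*x0 + 2*(c₀:ℂ)^3*(s₀:ℂ)*xm1 + (c₀:ℂ)^4*xm2‖^2 = f := by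
    have : ((2*‖(s₀:ℂ)^4*xm2 - 2*(c₀:ℂ)*(s₀:ℂ)^3*xm1 + (c₀:ℂ)^2*(s₀:ℂ)^2*(Real.sqrt 6:ℂ)*x0 - 2*(c₀:ℂ)^3*(s₀:ℂ)*x1 + (c₀:ℂ)^4*x2‖^2 + ‖-(s₀:ℂ)^4*xm1 - 2*(c₀:ℂ)*(s₀:ℂ)^3*xm2 + (c₀:ℂ)*(s₀:ℂ)^3*(Real.sqrt 6:ℂ)*x0 + 3*(c₀:ℂ)^2*(s₀:ℂ)^2*xm1 - 3*(c₀:ℂ)^2*(s₀:ℂ)^2*x1 + 2*(c₀:ℂ)^3*(s₀:ℂ)*x2 - (c₀:ℂ)^3*(s₀:ℂ)*(Real.sqrt 6:ℂ)*x0 + (c₀:ℂ)^4*x1‖^2 - ‖-(s₀:ℂ)^4*x1 + 2*(c₀:ℂ)*(s₀:ℂ)^3*x2 - (c₀:ℂ)*(s₀:ℂ)^3*(Real.sqrt 6:ℂ)*x0 - 3*(c₀:ℂ)^2*(s₀:ℂ)^2*xm1 + 3*(c₀:ℂ)^2*(s₀:ℂ)^2*x1 - 2*(c₀:ℂ)^3*(s₀:ℂ)*xm2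 + (c₀:ℂ)^3*(s₀:ℂ)*(Real.sqrt 6:ℂ)*x0 + (c₀:ℂ)^4*xm1‖^2 - 2*‖(s₀:ℂ)^4*x2 + 2*(c₀:ℂ)*(s₀:ℂ)^3*x1 + (c₀:ℂ)^2*(s₀:ℂ)^2*(Real.sqrt 6:ℂ)*x0 + 2*(c₀:ℂ)^3*(s₀:ℂ)*xm1 + (c₀:ℂ)^4*xm2‖^2 : ℝ):ℂ) = ((f:ℝ):ℂ) := by
      push_cast [habs]
      rw [hco2, hco1, hcom1, hcom2]
      calc 2*(((s₀:ℂ)^4*xm2 - 2*(c₀:ℂ)*(s₀:ℂ)^3*xm1 + (c₀:ℂ)^2*(s₀:ℂ)^2*(Real.sqrt 6:ℂ)*x0 - 2*(c₀:ℂ)^3*(s₀:ℂ)*x1 + (c₀:ℂ)^4*x2) * ((s₀:ℂ)^4*((starRingEnd ℂ) xm2) - 2*(c₀:ℂ)*(s₀:ℂ)^3*((starRingEnd ℂ) xm1) + (c₀:ℂ)^2*(s₀:ℂ)^2*(Real.sqrt 6:ℂ)*((starRingEnd ℂ) x0) - 2*(c₀:ℂ)^3*(s₀:ℂ)*((starRingEnd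 ℂ) x1) + (c₀:ℂ)^4*((starRingEnd ℂ) x2))) + (-(s₀:ℂ)^4*xm1 - 2*(c₀:ℂ)*(s₀:ℂ)^3*xm2 + (c₀:ℂ)*(s₀:ℂ)^3*(Real.sqrt 6:ℂ)*x0 + 3*(c₀:ℂ)^2*(s₀:ℂ)^2*xm1 - 3*(c₀:ℂ)^2*(s₀:ℂ)^2*x1 + 2*(c₀:ℂ)^3*(s₀:ℂ)*x2 - (c₀:ℂ)^3*(s₀:ℂ)*(Real.sqrt 6:ℂ)*x0 + (c₀:ℂ)^4*x1) * (-(s₀:ℂ)^4*((starRingEnd ℂ) xm1) - 2*(c₀:ℂ)*(s₀:ℂ)^3*((starRingEnd ℂ) xm2) + (c₀:ℂ)*(s₀:ℂ)^3*(Real.sqrt 6:ℂ)*((starRingEnd ℂ) x0) + 3*(c₀:ℂ)^2*(s₀:ℂ)^2*((starRingEnd ℂ) xm1) - 3*(c₀:ℂ)^2*(s₀:ℂ)^2*((starRingEnd ℂ) x1) + 2*(c₀:ℂ)^3*(s₀:ℂ)*((starRingEnd ℂ) x2) - (c₀:ℂ)^3*(s₀:ℂ)*(Real.sqrt 6:ℂ)*((starRingEnd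 ℂ) x0) + (c₀:ℂ)^4*((starRingEnd ℂ) x1)) - (-(s₀:ℂ)^4*x1 + 2*(c₀:ℂ)*(s₀:ℂ)^3*x2 - (c₀:ℂ)*(s₀:ℂ)^3*(Real.sqrt 6:ℂ)*x0 - 3*(c₀:ℂ)^2*(s₀:ℂ)^2*xm1 + 3*(c₀:ℂ)^2*(s₀:ℂ)^2*x1 - 2*(c₀:ℂ)^3*(s₀:ℂ)*xm2 + (c₀:ℂ)^3*(s₀:ℂ)*(Real.sqrt 6:ℂ)*x0 + (c₀:ℂ)^4*xm1) * (-(s₀:ℂ)^4*((starRingEnd ℂ) x1) + 2*(c₀:ℂ)*(s₀:ℂ)^3*((starRingEnd ℂ) x2) - (c₀:ℂ)*(s₀:ℂ)^3*(Real.sqrt 6:ℂ)*((starRingEnd ℂ) x0) - 3*(c₀:ℂ)^2*(s₀:ℂ)^2*((starRingEnd ℂ) xm1) + 3*(c₀:ℂ)^2*(s₀:ℂ)^2*((starRingEnd ℂ) x1) - 2*(c₀:ℂ)^3*(s₀:ℂ)*((starRingEnd ℂ) xm2) + (c₀:ℂ)^3*(s₀:ℂ)*(Real.sqrt 6:ℂ)*((starRingEnd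 ℂ) x0) + (c₀:ℂ)^4*((starRingEnd ℂ) xm1)) - 2*(((s₀:ℂ)^4*x2 + 2*(c₀:ℂ)*(s₀:ℂ)^3*x1 + (c₀:ℂ)^2*(s₀:ℂ)^2*(Real.sqrt 6:ℂ)*x0 + 2*(c₀:ℂ)^3*(s₀:ℂ)*xm1 + (c₀:ℂ)^4*xm2) * ((s₀:ℂ)^4*((starRingEnd ℂ) x2) + 2*(c₀:ℂ)*(s₀:ℂ)^3*((starRingEnd ℂ) x1) + (c₀:ℂ)^2*(s₀:ℂ)^2*(Real.sqrt 6:ℂ)*((starRingEnd ℂ) x0) + 2*(c₀:ℂ)^3*(s₀:ℂ)*((starRingEnd ℂ) xm1) + (c₀:ℂ)^4*((starRingEnd ℂ) xm2)))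
          = ((c₀:ℂ)^2 - (s₀:ℂ)^2) * (2*(x2*(starRingEnd ℂ) x2) + x1*(starRingEnd ℂ) x1 - xm1*(starRingEnd ℂ) xm1 - 2*(xm2*(starRingEnd ℂ) xm2))
            - (c₀:ℂ)*(s₀:ℂ)*((2*((starRingEnd ℂ) x2*x1 + (starRingEnd ℂ) xm1*xm2) + ((Real.sqrt 6:ℝ):ℂ)*((starRingEnd ℂ) x1*x0 + (starRingEnd ℂ) x0*xm1))
              + (2*(x2*(starRingEnd ℂ) x1 + xm1*(starRingEnd ℂ) xm2) + ((Real.sqrt 6:ℝ):ℂ)*(x1*(starRingEnd ℂ) x0 + x0*(starRingEnd ℂ) xm1))) := by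
            linear_combination hrotF
        _ = ((f:ℝ):ℂ) := by
            have e1 : (2*((starRingEnd ℂ) x2*x1 + (starRingEnd ℂ) xm1*xm2) + ((Real.sqrt 6:ℝ):ℂ)*((starRingEnd ℂ) x1*x0 + (starRingEnd ℂ) x0*xm1)) = ((t:ℝ):ℂ) := hτ
            have e2 : (2*(x2*(starRingEnd ℂ) x1 + xm1*(starRingEnd ℂ) xm2) + ((Real.sqrt 6:ℝ):ℂ)*(x1*(starRingEnd ℂ) x0 + x0*(starRingEnd ℂ) xm1)) = ((t:ℝ):ℂ) := by
              have := hτ'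
              simp only [tauC, map_add, map_mul, map_ofNat, Complex.conj_conj, Complex.conj_ofReal] at this
              linear_combination this
            have e3 : (2*(x2*(starRingEnd ℂ) x2) + x1*(starRingEnd ℂ) x1 - xm1*(starRingEnd ℂ) xm1 - 2*(xm2*(starRingEnd ℂ) xm2)) = ((M:ℝ):ℂ) := by
              rw [← habs x2, ← habs x1, ← habs xm1, ← habs xm2]
              push_cast
              exact_mod_cast congrArg (fun y : ℝ => ((y:ℝ):ℂ)) hFz
            rw [e1, e2, e3]
            have : ((c₀:ℂ)^2 - (s₀:ℂ)^2) * ((M:ℝ):ℂ) - (c₀:ℂ)*(s₀:ℂ)*(((t:ℝ):ℂ) + ((t:ℝ):ℂ)) = ((f:ℝ):ℂ) := by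
              exact_mod_cast congrArg (fun y : ℝ => ((y:ℝ):ℂ)) hrot
            linear_combination this
    exact_mod_cast this
  -- delta invariance
  have keyD : deltaC ((s₀:ℂ)^4*xm2 - 2*(c₀:ℂ)*(s₀:ℂ)^3*xm1 + (c₀:ℂ)^2*(s₀:ℂ)^2*(Real.sqrt 6:ℂ)*x0 - 2*(c₀:ℂ)^3*(s₀:ℂ)*x1 + (c₀:ℂ)^4*x2) (-(s₀:ℂ)^4*xm1 - 2*(c₀:ℂ)*(s₀:ℂ)^3*xm2 + (c₀:ℂ)*(s₀:ℂ)^3*(Real.sqrt 6:ℂ)*x0 + 3*(c₀:ℂ)^2*(s₀:ℂ)^2*xm1 - 3*(c₀:ℂ)^2*(s₀:ℂ)^2*x1 + 2*(c₀:ℂ)^3*(s₀:ℂ)*x2 - (c₀:ℂ)^3*(s₀:ℂ)*(Real.sqrt 6:ℂ)*x0 + (c₀:ℂ)^4*x1) (x0 + (c₀:ℂ)*(s₀:ℂ)^3*(Real.sqrt 6:ℂ)*xm1 - (c₀:ℂ)*(s₀:ℂ)^3*(Real.sqrt 6:ℂ)*x1 - 6*(c₀:ℂ)^2*(s₀:ℂ)^2*x0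 + (c₀:ℂ)^2*(s₀:ℂ)^2*(Real.sqrt 6:ℂ)*xm2 + (c₀:ℂ)^2*(s₀:ℂ)^2*(Real.sqrt 6:ℂ)*x2 - (c₀:ℂ)^3*(s₀:ℂ)*(Real.sqrt 6:ℂ)*xm1 + (c₀:ℂ)^3*(s₀:ℂ)*(Real.sqrt 6:ℂ)*x1) (-(s₀:ℂ)^4*x1 + 2*(c₀:ℂ)*(s₀:ℂ)^3*x2 - (c₀:ℂ)*(s₀:ℂ)^3*(Real.sqrt 6:ℂ)*x0 - 3*(c₀:ℂ)^2*(s₀:ℂ)^2*xm1 + 3*(c₀:ℂ)^2*(s₀:ℂ)^2*x1 - 2*(c₀:ℂ)^3*(s₀:ℂ)*xm2 + (c₀:ℂ)^3*(s₀:ℂ)*(Real.sqrt 6:ℂ)*x0 + (c₀:ℂ)^4*xm1) ((s₀:ℂ)^4*x2 + 2*(c₀:ℂ)*(s₀:ℂ)^3*x1 + (c₀:ℂ)^2*(s₀:ℂ)^2*(Real.sqrt 6:ℂ)*x0 + 2*(c₀:ℂ)^3*(s₀:ℂ)*xm1 + (c₀:ℂ)^4*xm2) = deltaC x2 x1 x0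 xm1 xm2 := by
    show 2 * ((s₀:ℂ)^4*xm2 - 2*(c₀:ℂ)*(s₀:ℂ)^3*xm1 + (c₀:ℂ)^2*(s₀:ℂ)^2*(Real.sqrt 6:ℂ)*x0 - 2*(c₀:ℂ)^3*(s₀:ℂ)*x1 + (c₀:ℂ)^4*x2) * ((s₀:ℂ)^4*x2 + 2*(c₀:ℂ)*(s₀:ℂ)^3*x1 + (c₀:ℂ)^2*(s₀:ℂ)^2*(Real.sqrt 6:ℂ)*x0 + 2*(c₀:ℂ)^3*(s₀:ℂ)*xm1 + (c₀:ℂ)^4*xm2) - 2 * (-(s₀:ℂ)^4*xm1 - 2*(c₀:ℂ)*(s₀:ℂ)^3*xm2 + (c₀:ℂ)*(s₀:ℂ)^3*(Real.sqrt 6:ℂ)*x0 + 3*(c₀:ℂ)^2*(s₀:ℂ)^2*xm1 - 3*(c₀:ℂ)^2*(s₀:ℂ)^2*x1 + 2*(c₀:ℂ)^3*(s₀:ℂ)*x2 - (c₀:ℂ)^3*(s₀:ℂ)*(Real.sqrt 6:ℂ)*x0 + (c₀:ℂ)^4*x1) * (-(s₀:ℂ)^4*x1 + 2*(c₀:ℂ)*(s₀:ℂ)^3*x2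 - (c₀:ℂ)*(s₀:ℂ)^3*(Real.sqrt 6:ℂ)*x0 - 3*(c₀:ℂ)^2*(s₀:ℂ)^2*xm1 + 3*(c₀:ℂ)^2*(s₀:ℂ)^2*x1 - 2*(c₀:ℂ)^3*(s₀:ℂ)*xm2 + (c₀:ℂ)^3*(s₀:ℂ)*(Real.sqrt 6:ℂ)*x0 + (c₀:ℂ)^4*xm1) + (x0 + (c₀:ℂ)*(s₀:ℂ)^3*(Real.sqrt 6:ℂ)*xm1 - (c₀:ℂ)*(s₀:ℂ)^3*(Real.sqrt 6:ℂ)*x1 - 6*(c₀:ℂ)^2*(s₀:ℂ)^2*x0 + (c₀:ℂ)^2*(s₀:ℂ)^2*(Real.sqrt 6:ℂ)*xm2 + (c₀:ℂ)^2*(s₀:ℂ)^2*(Real.sqrt 6:ℂ)*x2 - (c₀:ℂ)^3*(s₀:ℂ)*(Real.sqrt 6:ℂ)*xm1 + (c₀:ℂ)^3*(s₀:ℂ)*(Real.sqrt 6:ℂ)*x1)^2 = _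
    rw [deltaC]
    linear_combination hrotD
  have hnem := nematic ((s₀:ℂ)^4*xm2 - 2*(c₀:ℂ)*(s₀:ℂ)^3*xm1 + (c₀:ℂ)^2*(s₀:ℂ)^2*(Real.sqrt 6:ℂ)*x0 - 2*(c₀:ℂ)^3*(s₀:ℂ)*x1 + (c₀:ℂ)^4*x2) (-(s₀:ℂ)^4*xm1 - 2*(c₀:ℂ)*(s₀:ℂ)^3*xm2 + (c₀:ℂ)*(s₀:ℂ)^3*(Real.sqrt 6:ℂ)*x0 + 3*(c₀:ℂ)^2*(s₀:ℂ)^2*xm1 - 3*(c₀:ℂ)^2*(s₀:ℂ)^2*x1 + 2*(c₀:ℂ)^3*(s₀:ℂ)*x2 - (c₀:ℂ)^3*(s₀:ℂ)*(Real.sqrt 6:ℂ)*x0 + (c₀:ℂ)^4*x1) (x0 + (c₀:ℂ)*(s₀:ℂ)^3*(Real.sqrt 6:ℂ)*xm1 - (c₀:ℂ)*(s₀:ℂ)^3*(Real.sqrt 6:ℂ)*x1 - 6*(c₀:ℂ)^2*(s₀:ℂ)^2*x0 + (c₀:ℂ)^2*(s₀:ℂ)^2*(Real.sqrt 6:ℂ)*xm2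 + (c₀:ℂ)^2*(s₀:ℂ)^2*(Real.sqrt 6:ℂ)*x2 - (c₀:ℂ)^3*(s₀:ℂ)*(Real.sqrt 6:ℂ)*xm1 + (c₀:ℂ)^3*(s₀:ℂ)*(Real.sqrt 6:ℂ)*x1) (-(s₀:ℂ)^4*x1 + 2*(c₀:ℂ)*(s₀:ℂ)^3*x2 - (c₀:ℂ)*(s₀:ℂ)^3*(Real.sqrt 6:ℂ)*x0 - 3*(c₀:ℂ)^2*(s₀:ℂ)^2*xm1 + 3*(c₀:ℂ)^2*(s₀:ℂ)^2*x1 - 2*(c₀:ℂ)^3*(s₀:ℂ)*xm2 + (c₀:ℂ)^3*(s₀:ℂ)*(Real.sqrt 6:ℂ)*x0 + (c₀:ℂ)^4*xm1) ((s₀:ℂ)^4*x2 + 2*(c₀:ℂ)*(s₀:ℂ)^3*x1 + (c₀:ℂ)^2*(s₀:ℂ)^2*(Real.sqrt 6:ℂ)*x0 + 2*(c₀:ℂ)^3*(s₀:ℂ)*xm1 + (c₀:ℂ)^4*xm2) keyN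
  rw [keyF, keyD] at hnem
  nlinarith [hnem, hf2]

lemma master (M : ℝ) (hM : 0 ≤ M) (a b c d e : ℂ)
    (hn : ‖a‖ ^ 2 + ‖b‖ ^ 2 + ‖c‖ ^ 2 + ‖d‖ ^ 2 + ‖e‖ ^ 2 = 1)
    (hFz : 2 * ‖a‖ ^ 2 + ‖b‖ ^ 2 - ‖d‖ ^ 2 - 2 * ‖e‖ ^ 2 = M) :
    ‖tauC a b c d e‖^2 + 4 * ‖deltaC a b c d e‖^2 + M^2 ≤ 4 := by
  by_cases hτ0 : tauC a b c d e = 0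
  · have hnem := nematic a b c d e hn
    rw [hFz] at hnem
    rw [hτ0]
    simp only [map_zero, norm_zero]
    nlinarith [hnem]
  · set t := ‖tauC a b c d e‖ with ht
    have ht0 : 0 < t := norm_pos_iff.mpr hτ0
    have htC : (t:ℂ) ≠ 0 := by exact_mod_cast ht0.ne'
    set v : ℂ := tauC a b c d e / t with hv0
    have hva : ‖v‖ = 1 := by
      rw [hv0, norm_div, Complex.norm_real, Real.norm_eq_abs, abs_of_pos ht0, ← ht, div_self ht0.ne']
    have hv : v * (starRingEnd ℂ) v = 1 := by
      rw [Complex.mul_conj, Complex.normSq_eq_norm_sq, hva]; norm_num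
    have ha2 : ‖v^2*a‖ = ‖a‖ := by rw [norm_mul, norm_pow, hva]; ring
    have hb2 : ‖v*b‖ = ‖b‖ := by rw [norm_mul, hva]; ring
    have hd2 : ‖(starRingEnd ℂ) v * d‖ = ‖d‖ := by
      rw [norm_mul, Complex.norm_conj, hva]; ring
    have he2 : ‖((starRingEnd ℂ) v)^2 * e‖ = ‖e‖ := by
      rw [norm_mul, norm_pow, Complex.norm_conj, hva]; ring
    have hτ1 : tauC (v^2*a) (v*b) c ((starRingEnd ℂ) v * d) (((starRingEnd ℂ) v)^2 * e) = ((t:ℝ):ℂ) := by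
      have h1 : tauC (v^2*a) (v*b) c ((starRingEnd ℂ) v * d) (((starRingEnd ℂ) v)^2 * e)
          = (starRingEnd ℂ) v * tauC a b c d e := by
        simp only [tauC, map_mul, map_pow, Complex.conj_conj]
        linear_combination ((starRingEnd ℂ) v * (2*((starRingEnd ℂ) a * b + (starRingEnd ℂ) d * e))) * hv
      rw [h1, hv0, map_div₀, Complex.conj_ofReal, div_mul_eq_mul_div, mul_comm, Complex.mul_conj,
        Complex.normSq_eq_norm_sq, ← ht]
      push_cast
      field_simp
    have hδ1 : deltaC (v^2*a) (v*b) c ((starRingEnd ℂ) v * d) (((starRingEnd ℂ) v)^2 * e)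
        = deltaC a b c d e := by
      simp only [deltaC]
      linear_combination ((v * (starRingEnd ℂ) v + 1)*(2*a*e) - 2*b*d) * hv
    have hkey := rotate M t hM ht0 (v^2*a) (v*b) c ((starRingEnd ℂ) v * d) (((starRingEnd ℂ) v)^2 * e)
      (by rw [ha2, hb2, hd2, he2]; exact hn)
      (by rw [ha2, hb2, hd2, he2]; exact hFz) hτ1
    rw [hδ1] at hkey
    linarith

set_option maxHeartbeats 1000000 in
theorem stmt5 (M b0 b1 b2 : ℝ) (hM0 : 0 ≤ M) (hM2 : M ≤ 2) :
    ∃ r2 r1 r0 rm1 rm2 : ℝ,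
      memSC M (r2 : ℂ) (r1 : ℂ) (r0 : ℂ) (rm1 : ℂ) (rm2 : ℂ) ∧
      ∀ z2 z1 z0 zm1 zm2 : ℂ, memSC M z2 z1 z0 zm1 zm2 →
        EU b0 b1 b2 M (r2 : ℂ) (r1 : ℂ) (r0 : ℂ) (rm1 : ℂ) (rm2 : ℂ)
          ≤ EU b0 b1 b2 M z2 z1 z0 zm1 zm2 := by
  have habs2 : ∀ x : ℝ, ‖((x:ℝ):ℂ)‖^2 = x^2 := fun x => by
    rw [Complex.norm_real, Real.norm_eq_abs, sq_abs]
  set γ := Real.sqrt ((2+M)/4) with hγdef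
  set σ := Real.sqrt ((2-M)/4) with hσdef
  have hγ2 : γ^2 = (2+M)/4 := Real.sq_sqrt (by linarith)
  have hσ2 : σ^2 = (2-M)/4 := Real.sq_sqrt (by linarith)
  have hγσ : γ^2 + σ^2 = 1 := by rw [hγ2, hσ2]; ring
  have hu2 : (Real.sqrt 6)^2 = 6 := Real.sq_sqrt (by norm_num)
  have hw2 : (Real.sqrt 2)^2 = 2 := Real.sq_sqrt (by norm_num)
  have hγσC : ((γ:ℝ):ℂ)^2 + ((σ:ℝ):ℂ)^2 = 1 := by exact_mod_cast hγσ
  have hu2C : ((Real.sqrt 6:ℝ):ℂ)^2 = 6 := by exact_mod_cast hu2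
  have hw2C : ((Real.sqrt 2:ℝ):ℂ)^2 = 2 := by exact_mod_cast hw2
  have masterSC : ∀ z2 z1 z0 zm1 zm2 : ℂ, memSC M z2 z1 z0 zm1 zm2 →
      ‖tauC z2 z1 z0 zm1 zm2‖^2 + 4*‖deltaC z2 z1 z0 zm1 zm2‖^2 + M^2 ≤ 4 :=
    fun z2 z1 z0 zm1 zm2 hm => master M hM0 z2 z1 z0 zm1 zm2 hm.1 hm.2
  rcases le_or_gt 0 b1 with hb1 | hb1
  · rcases le_or_gt 0 b2 with hb2 | hb2
    · -- b1 ≥ 0, b2 ≥ 0 : cyclic state, τ = δ = 0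
      refine ⟨γ^2, 0, Real.sqrt 2 * (γ*σ), 0, -(σ^2), ⟨?_, ?_⟩, ?_⟩
      · simp only [habs2]
        linear_combination (γ^2+σ^2+1)*hγσ + (γ^2*σ^2)*hw2
      · simp only [habs2]
        linear_combination 2*(γ^2-σ^2)*hγσ + 2*hγ2 - 2*hσ2
      · intro z2 z1 z0 zm1 zm2 hm
        have hτC : tauC ((γ^2:ℝ):ℂ) ((0:ℝ):ℂ) ((Real.sqrt 2*(γ*σ):ℝ):ℂ) ((0:ℝ):ℂ) ((-(σ^2):ℝ):ℂ) = 0 := by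
          simp [tauC]
        have hδC : deltaC ((γ^2:ℝ):ℂ) ((0:ℝ):ℂ) ((Real.sqrt 2*(γ*σ):ℝ):ℂ) ((0:ℝ):ℂ) ((-(σ^2):ℝ):ℂ) = 0 := by
          simp only [deltaC]
          push_cast
          linear_combination ((γ:ℂ)^2*(σ:ℂ)^2)*hw2C
        have h1 : 0 ≤ b1 * ‖tauC z2 z1 z0 zm1 zm2‖^2 :=
          mul_nonneg hb1 (sq_nonneg _)
        have h2 : 0 ≤ (b2/5) * ‖deltaC z2 z1 z0 zm1 zm2‖^2 :=
          mul_nonneg (by linarith) (sq_nonneg _)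
        simp only [EU, hτC, hδC, map_zero, norm_zero]
        nlinarith [h1, h2]
    · -- b1 ≥ 0, b2 < 0 : nematic state
      refine ⟨γ, 0, 0, 0, σ, ⟨?_, ?_⟩, ?_⟩
      · simp only [habs2]
        linear_combination hγσ
      · simp only [habs2]
        linear_combination 2*hγ2 - 2*hσ2
      · intro z2 z1 z0 zm1 zm2 hm
        have hτN : tauC ((γ:ℝ):ℂ) ((0:ℝ):ℂ) ((0:ℝ):ℂ) ((0:ℝ):ℂ) ((σ:ℝ):ℂ) = 0 := by
          simp [tauC]
        have hδN : deltaC ((γ:ℝ):ℂ) ((0:ℝ):ℂ) ((0:ℝ):ℂ) ((0:ℝ):ℂ) ((σ:ℝ):ℂ) = ((2*γ*σ:ℝ):ℂ) := by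
          simp only [deltaC]
          push_cast
          ring
        have hY : ‖deltaC ((γ:ℝ):ℂ) ((0:ℝ):ℂ) ((0:ℝ):ℂ) ((0:ℝ):ℂ) ((σ:ℝ):ℂ)‖^2 = (4-M^2)/4 := by
          rw [hδN, habs2]
          linear_combination (4*σ^2)*hγ2 + (2+M)*hσ2
        have hkey := masterSC z2 z1 z0 zm1 zm2 hm
        have hX0 : 0 ≤ ‖tauC z2 z1 z0 zm1 zm2‖^2 := sq_nonneg _
        have hY4 : ‖deltaC z2 z1 z0 zm1 zm2‖^2 ≤ (4-M^2)/4 := by linarith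
        have h1 : b2 * ((4-M^2)/4) ≤ b2 * ‖deltaC z2 z1 z0 zm1 zm2‖^2 :=
          mul_le_mul_of_nonpos_left hY4 hb2.le
        have h2 : 0 ≤ b1 * ‖tauC z2 z1 z0 zm1 zm2‖^2 := mul_nonneg hb1 (sq_nonneg _)
        simp only [EU, hτN, map_zero, norm_zero, hY]
        nlinarith [h1, h2]
  · rcases le_or_gt 0 b2 with hb2 | hb2
    · -- b1 < 0, b2 ≥ 0 : ferromagnetic state
      refine ⟨γ^4, 2*(γ^3*σ), Real.sqrt 6*(γ^2*σ^2), 2*(γ*σ^3), σ^4, ⟨?_, ?_⟩, ?_⟩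
      · simp only [habs2]
        linear_combination ((γ^2+σ^2)^3+(γ^2+σ^2)^2+(γ^2+σ^2)+1)*hγσ + (γ^4*σ^4)*hu2
      · simp only [habs2]
        linear_combination 2*(γ^2-σ^2)*((γ^2+σ^2)^2+(γ^2+σ^2)+1)*hγσ + 2*hγ2 - 2*hσ2
      · intro z2 z1 z0 zm1 zm2 hm
        have hτF : tauC ((γ^4:ℝ):ℂ) ((2*(γ^3*σ):ℝ):ℂ) ((Real.sqrt 6*(γ^2*σ^2):ℝ):ℂ) ((2*(γ*σ^3):ℝ):ℂ) ((σ^4:ℝ):ℂ)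
            = ((4*(γ*σ):ℝ):ℂ) := by
          simp only [tauC, Complex.conj_ofReal]
          push_cast
          linear_combination (4*(γ:ℂ)*(σ:ℂ)*(((γ:ℂ)^2+(σ:ℂ)^2)^2+((γ:ℂ)^2+(σ:ℂ)^2)+1))*hγσC
            + (2*(γ:ℂ)^5*(σ:ℂ)^3+2*(γ:ℂ)^3*(σ:ℂ)^5)*hu2C
        have hδF : deltaC ((γ^4:ℝ):ℂ) ((2*(γ^3*σ):ℝ):ℂ) ((Real.sqrt 6*(γ^2*σ^2):ℝ):ℂ) ((2*(γ*σ^3):ℝ):ℂ) ((σ^4:ℝ):ℂ)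
            = 0 := by
          simp only [deltaC]
          push_cast
          linear_combination ((γ:ℂ)^4*(σ:ℂ)^4)*hu2C
        have hXF : ‖tauC ((γ^4:ℝ):ℂ) ((2*(γ^3*σ):ℝ):ℂ) ((Real.sqrt 6*(γ^2*σ^2):ℝ):ℂ) ((2*(γ*σ^3):ℝ):ℂ) ((σ^4:ℝ):ℂ)‖^2
            = 4 - M^2 := by
          rw [hτF, habs2]
          linear_combination (16*σ^2)*hγ2 + 4*(2+M)*hσ2
        have hkey := masterSC z2 z1 z0 zm1 zm2 hm
        have hY0 : 0 ≤ ‖deltaC z2 z1 z0 zm1 zm2‖^2 := sq_nonneg _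
        have hX4 : ‖tauC z2 z1 z0 zm1 zm2‖^2 ≤ 4 - M^2 := by linarith
        have h1 : b1 * (4-M^2) ≤ b1 * ‖tauC z2 z1 z0 zm1 zm2‖^2 :=
          mul_le_mul_of_nonpos_left hX4 hb1.le
        have h2 : 0 ≤ (b2/5) * ‖deltaC z2 z1 z0 zm1 zm2‖^2 :=
          mul_nonneg (by linarith) (sq_nonneg _)
        simp only [EU, hδF, map_zero, norm_zero, hXF]
        nlinarith [h1, h2]
    · rcases le_or_gt b1 (b2/20) with hcmp | hcmp
      · -- b1 < 0, b2 < 0, b1 ≤ b2/20 : ferromagnetic state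
        refine ⟨γ^4, 2*(γ^3*σ), Real.sqrt 6*(γ^2*σ^2), 2*(γ*σ^3), σ^4, ⟨?_, ?_⟩, ?_⟩
        · simp only [habs2]
          linear_combination ((γ^2+σ^2)^3+(γ^2+σ^2)^2+(γ^2+σ^2)+1)*hγσ + (γ^4*σ^4)*hu2
        · simp only [habs2]
          linear_combination 2*(γ^2-σ^2)*((γ^2+σ^2)^2+(γ^2+σ^2)+1)*hγσ + 2*hγ2 - 2*hσ2
        · intro z2 z1 z0 zm1 zm2 hm
          have hτF : tauC ((γ^4:ℝ):ℂ) ((2*(γ^3*σ):ℝ):ℂ) ((Real.sqrt 6*(γ^2*σ^2):ℝ):ℂ) ((2*(γ*σ^3):ℝ):ℂ) ((σ^4:ℝ):ℂ)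
              = ((4*(γ*σ):ℝ):ℂ) := by
            simp only [tauC, Complex.conj_ofReal]
            push_cast
            linear_combination (4*(γ:ℂ)*(σ:ℂ)*(((γ:ℂ)^2+(σ:ℂ)^2)^2+((γ:ℂ)^2+(σ:ℂ)^2)+1))*hγσC
              + (2*(γ:ℂ)^5*(σ:ℂ)^3+2*(γ:ℂ)^3*(σ:ℂ)^5)*hu2C
          have hδF : deltaC ((γ^4:ℝ):ℂ) ((2*(γ^3*σ):ℝ):ℂ) ((Real.sqrt 6*(γ^2*σ^2):ℝ):ℂ) ((2*(γ*σ^3):ℝ):ℂ) ((σ^4:ℝ):ℂ)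
              = 0 := by
            simp only [deltaC]
            push_cast
            linear_combination ((γ:ℂ)^4*(σ:ℂ)^4)*hu2C
          have hXF : ‖tauC ((γ^4:ℝ):ℂ) ((2*(γ^3*σ):ℝ):ℂ) ((Real.sqrt 6*(γ^2*σ^2):ℝ):ℂ) ((2*(γ*σ^3):ℝ):ℂ) ((σ^4:ℝ):ℂ)‖^2
              = 4 - M^2 := by
            rw [hτF, habs2]
            linear_combination (16*σ^2)*hγ2 + 4*(2+M)*hσ2
          have hkey := masterSC z2 z1 z0 zm1 zm2 hm
          have hXY : ‖tauC z2 z1 z0 zm1 zm2‖^2 + 4*‖deltaC z2 z1 z0 zm1 zm2‖^2 ≤ 4 - M^2 := by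
            linarith
          have h1 : b1 * (4-M^2) ≤ b1 * (‖tauC z2 z1 z0 zm1 zm2‖^2 + 4*‖deltaC z2 z1 z0 zm1 zm2‖^2) :=
            mul_le_mul_of_nonpos_left hXY hb1.le
          have h2 : b1 * (4*‖deltaC z2 z1 z0 zm1 zm2‖^2) ≤ (b2/20) * (4*‖deltaC z2 z1 z0 zm1 zm2‖^2) :=
            mul_le_mul_of_nonneg_right hcmp (by positivity)
          simp only [EU, hδF, map_zero, norm_zero, hXF]
          nlinarith [h1, h2]
      · -- b1 < 0, b2 < 0, b2/20 < b1 : nematic state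
        refine ⟨γ, 0, 0, 0, σ, ⟨?_, ?_⟩, ?_⟩
        · simp only [habs2]
          linear_combination hγσ
        · simp only [habs2]
          linear_combination 2*hγ2 - 2*hσ2
        · intro z2 z1 z0 zm1 zm2 hm
          have hτN : tauC ((γ:ℝ):ℂ) ((0:ℝ):ℂ) ((0:ℝ):ℂ) ((0:ℝ):ℂ) ((σ:ℝ):ℂ) = 0 := by
            simp [tauC]
          have hδN : deltaC ((γ:ℝ):ℂ) ((0:ℝ):ℂ) ((0:ℝ):ℂ) ((0:ℝ):ℂ) ((σ:ℝ):ℂ) = ((2*γ*σ:ℝ):ℂ) := by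
            simp only [deltaC]
            push_cast
            ring
          have hY : ‖deltaC ((γ:ℝ):ℂ) ((0:ℝ):ℂ) ((0:ℝ):ℂ) ((0:ℝ):ℂ) ((σ:ℝ):ℂ)‖^2 = (4-M^2)/4 := by
            rw [hδN, habs2]
            linear_combination (4*σ^2)*hγ2 + (2+M)*hσ2
          have hkey := masterSC z2 z1 z0 zm1 zm2 hm
          have hXY : ‖tauC z2 z1 z0 zm1 zm2‖^2 + 4*‖deltaC z2 z1 z0 zm1 zm2‖^2 ≤ 4 - M^2 := by
            linarith
          have h1 : (b2/20) * (4-M^2) ≤ (b2/20) * (‖tauC z2 z1 z0 zm1 zm2‖^2 + 4*‖deltaC z2 z1 z0 zm1 zm2‖^2) :=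
            mul_le_mul_of_nonpos_left hXY (by linarith)
          have h2 : (b2/20) * ‖tauC z2 z1 z0 zm1 zm2‖^2 ≤ b1 * ‖tauC z2 z1 z0 zm1 zm2‖^2 :=
            mul_le_mul_of_nonneg_right hcmp.le (by positivity)
          simp only [EU, hτN, map_zero, norm_zero, hY]
          nlinarith [h1, h2]
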